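/- Let (x₁, y₁, x₂, y₂, Γ, σ) be a differentiable solution of the soliton system on an interval I with σ(τ) = 0, x₁(τ) > 0, x₂(τ) > 0, and F(τ) = 0 for all τ ∈ I. Then the Lyapunov function W = (1/2) Σ_{α=1,2} p_α (x_α − (n−1) log x_α + y_α²) satisfies W'(τ) = Σ_{α=1,2} p_α ((Γ(τ)+n) y_α(τ) + (Γ(τ)+1) y_α(τ)²) for all τ ∈ I; if in addition Γ(τ) + 1 ≤ 0, then W'(τ) ≤ −(Γ(τ)+n)². -/

import Mathlib

/-- Along a solution of the soliton system with `σ ≡ 0`,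
`x₁, x₂ > 0` and `F ≡ 0`, the Lyapunov function
`W = ½ Σ p_α (x_α − (n−1) log x_α + y_α²)` satisfies
`W' = Σ p_α ((Γ+n) y_α + (Γ+1) y_α²)`, and if moreover `Γ + 1 ≤ 0` then
`W' ≤ −(Γ+n)²`. -/
theorem soliton_system_lyapunov
    (p₁ p₂ : ℤ) (hp₁ : 2 ≤ p₁) (hp₂ : 2 ≤ p₂) (lam : ℝ)
    (n : ℝ) (hn : n = (p₁ : ℝ) + (p₂ : ℝ))
    (I : Set ℝ)
    (x₁ y₁ x₂ y₂ Γ σ : ℝ → ℝ)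
    (hx₁ : ∀ τ ∈ I, HasDerivAt x₁ (-2 * x₁ τ * y₁ τ) τ)
    (hy₁ : ∀ τ ∈ I, HasDerivAt y₁ (x₁ τ + (Γ τ + 1 - lam * σ τ) * y₁ τ + Γ τ + 1) τ)
    (hx₂ : ∀ τ ∈ I, HasDerivAt x₂ (-2 * x₂ τ * y₂ τ) τ)
    (hy₂ : ∀ τ ∈ I, HasDerivAt y₂ (x₂ τ + (Γ τ + 1 - lam * σ τ) * y₂ τ + Γ τ + 1) τ)
    (hΓ : ∀ τ ∈ I, HasDerivAt Γ
      (Γ τ + (p₁ : ℝ) * (1 + y₁ τ) ^ 2 + (p₂ : ℝ) * (1 + y₂ τ) ^ 2) τ)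
    (hσ : ∀ τ ∈ I, HasDerivAt σ (2 * σ τ) τ)
    (hσ0 : ∀ τ ∈ I, σ τ = 0)
    (hx₁pos : ∀ τ ∈ I, 0 < x₁ τ) (hx₂pos : ∀ τ ∈ I, 0 < x₂ τ)
    (hF0 : ∀ τ ∈ I, Γ τ + (p₁ : ℝ) * (1 + y₁ τ) + (p₂ : ℝ) * (1 + y₂ τ) = 0)
    (W D : ℝ → ℝ)
    (hW : W = fun τ => (1 / 2) * ((p₁ : ℝ) * (x₁ τ - (n - 1) * Real.log (x₁ τ) + (y₁ τ) ^ 2)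
        + (p₂ : ℝ) * (x₂ τ - (n - 1) * Real.log (x₂ τ) + (y₂ τ) ^ 2)))
    (hD : D = fun τ => (p₁ : ℝ) * ((Γ τ + n) * y₁ τ + (Γ τ + 1) * (y₁ τ) ^ 2)
        + (p₂ : ℝ) * ((Γ τ + n) * y₂ τ + (Γ τ + 1) * (y₂ τ) ^ 2)) :
    ∀ τ ∈ I, HasDerivAt W (D τ) τ ∧ (Γ τ + 1 ≤ 0 → D τ ≤ -(Γ τ + n) ^ 2) := by
  intro τ hτ
  have hX1 := hx₁ τ hτ
  have hX2 := hx₂ τ hτ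
  have hY1 := hy₁ τ hτ
  have hY2 := hy₂ τ hτ
  have hs := hσ0 τ hτ
  have h1 : x₁ τ ≠ 0 := ne_of_gt (hx₁pos τ hτ)
  have h2 : x₂ τ ≠ 0 := ne_of_gt (hx₂pos τ hτ)
  have hlog1 := hX1.log h1
  have hlog2 := hX2.log h2
  have hd1 := (hX1.sub (hlog1.const_mul (n - 1))).add (hY1.pow 2)
  have hd2 := (hX2.sub (hlog2.const_mul (n - 1))).add (hY2.pow 2)
  have hWd := ((hd1.const_mul (p₁ : ℝ)).add (hd2.const_mul (p₂ : ℝ))).const_mul (1 / 2 : ℝ)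
  constructor
  · rw [hW]
    convert hWd using 1
    case e'_4 => rfl
    case e'_5 => rfl
    case e'_8 => rfl
    rw [hD]
    simp only [hs]
    push_cast
    field_simp
    ring
  · intro hΓ1
    have hsum : (p₁ : ℝ) * y₁ τ + (p₂ : ℝ) * y₂ τ = -(Γ τ + n) := by
      linear_combination (hF0 τ hτ) + hn
    have key : D τ = -(Γ τ + n) ^ 2
        + (Γ τ + 1) * ((p₁ : ℝ) * (y₁ τ) ^ 2 + (p₂ : ℝ) * (y₂ τ) ^ 2) := by
      rw [hD]
      linear_combination (Γ τ + n) * hsum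
    rw [key]
    have hp1 : (0 : ℝ) ≤ (p₁ : ℝ) := by exact_mod_cast le_trans (by norm_num) hp₁
    have hp2 : (0 : ℝ) ≤ (p₂ : ℝ) := by exact_mod_cast le_trans (by norm_num) hp₂
    nlinarith [mul_nonneg hp1 (sq_nonneg (y₁ τ)), mul_nonneg hp2 (sq_nonneg (y₂ τ)),
      mul_nonpos_of_nonpos_of_nonneg hΓ1
        (add_nonneg (mul_nonneg hp1 (sq_nonneg (y₁ τ))) (mul_nonneg hp2 (sq_nonneg (y₂ τ))))]
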